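/- arXiv:2412.05349 — 2 statements merged into one kernel-verified Lean document; each statement's English description precedes it below -/
import Mathlib

section
/- Let α ∈ (0,1), ρ > 0, T > 0, A an n × n real matrix, and B an n × m real matrix. Define the controllability Gramian W_c[0,T] = ∫_0^T e^{-2ρ(T-τ)} (T-τ)^{2α-2} E_{α,α}((T-τ)^α A) B Bᵀ E_{α,α}((T-τ)^α A)ᵀ dτ. If W_c[0,T] is invertible, then for every initial state y₀ ∈ ℝⁿ the control u(τ) = -(T-τ)^{α-1} e^{-ρ(T-τ)} Bᵀ E_{α,α}(Aᵀ (T-τ)^α) W_c[0,T]^{-1} e^{-ρT} E_α(T^α A) y₀ steers the solution y(t) = e^{-ρt} E_α(A t^α) y₀ + ∫_0^t e^{-ρ(t-τ)} (t-τ)^{α-1} E_{α,α}(A(t-τ)^α) B u(τ) dτ to y(T) = 0. -/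
open Matrix MeasureTheory

attribute [local instance] Matrix.linftyOpNormedRing Matrix.linftyOpNormedAlgebra

/-- One-parameter matrix Mittag-Leffler function. -/
noncomputable def mlOne {n : ℕ} (α : ℝ) (M : Matrix (Fin n) (Fin n) ℝ) :
    Matrix (Fin n) (Fin n) ℝ :=
  ∑' l : ℕ, (Real.Gamma (α * l + 1))⁻¹ • M ^ l

/-- Two-parameter matrix Mittag-Leffler function with both parameters `α`. -/
noncomputable def mlTwo {n : ℕ} (α α' : ℝ) (M : Matrix (Fin n) (Fin n) ℝ) :
    Matrix (Fin n) (Fin n) ℝ :=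
  ∑' l : ℕ, (Real.Gamma (α * l + α'))⁻¹ • M ^ l

lemma mlTwo_transpose {n : ℕ} (α α' : ℝ) (M : Matrix (Fin n) (Fin n) ℝ) :
    mlTwo α α' Mᵀ = (mlTwo α α' M)ᵀ := by
  let e : Matrix (Fin n) (Fin n) ℝ ≃L[ℝ] Matrix (Fin n) (Fin n) ℝ :=
    (Matrix.transposeLinearEquiv (Fin n) (Fin n) ℝ ℝ).toContinuousLinearEquiv
  have he : ∀ x : Matrix (Fin n) (Fin n) ℝ, e x = xᵀ := fun _ => rfl
  unfold mlTwo
  have h : (fun l : ℕ => (Real.Gamma (α * l + α'))⁻¹ • Mᵀ ^ l)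
      = fun l : ℕ => e ((Real.Gamma (α * l + α'))⁻¹ • M ^ l) := by
    funext l; rw [he, Matrix.transpose_smul, Matrix.transpose_pow]
  rw [h, e.tsum_eq_iff]
  exact (e.symm_apply_apply _).symm

set_option maxHeartbeats 2000000 in
/-- If the controllability Gramian of the tempered fractional linear system is
invertible, the Gramian-based control steers any initial state `y₀` to `0` at time `T`. -/
theorem gramian_control_steers_to_zero {n m : ℕ}
    (α ρ T : ℝ) (hα : α ∈ Set.Ioo (0 : ℝ) 1) (hρ : 0 < ρ) (hT : 0 < T)
    (A : Matrix (Fin n) (Fin n) ℝ) (B : Matrix (Fin n) (Fin m) ℝ)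
    (y₀ : Fin n → ℝ)
    (Wc : Matrix (Fin n) (Fin n) ℝ)
    (hWc : Wc = fun i j => ∫ τ in (0 : ℝ)..T,
        (Real.exp (-2 * ρ * (T - τ)) * (T - τ) ^ (2 * α - 2)) *
          ((mlTwo α α ((T - τ) ^ α • A) * B * Bᵀ *
            (mlTwo α α ((T - τ) ^ α • A))ᵀ) i j))
    (hWcInt : ∀ i j, IntervalIntegrable (fun τ : ℝ =>
        (Real.exp (-2 * ρ * (T - τ)) * (T - τ) ^ (2 * α - 2)) *
          ((mlTwo α α ((T - τ) ^ α • A) * B * Bᵀ *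
            (mlTwo α α ((T - τ) ^ α • A))ᵀ) i j)) volume 0 T)
    (hInv : IsUnit Wc)
    (u : ℝ → Fin m → ℝ)
    (hu : u = fun τ => -((T - τ) ^ (α - 1) * Real.exp (-ρ * (T - τ)) *
        Real.exp (-ρ * T)) •
        ((Bᵀ * mlTwo α α ((T - τ) ^ α • Aᵀ) * Wc⁻¹ * mlOne α (T ^ α • A)) *ᵥ y₀))
    (y : ℝ → Fin n → ℝ)
    (hy : y = fun t => Real.exp (-ρ * t) • (mlOne α (t ^ α • A) *ᵥ y₀) +
        ∫ τ in (0 : ℝ)..t,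
          (Real.exp (-ρ * (t - τ)) * (t - τ) ^ (α - 1)) •
            ((mlTwo α α ((t - τ) ^ α • A) * B) *ᵥ u τ)) :
    y T = 0 := by
  obtain ⟨hα0, hα1⟩ := hα
  set e : ℝ := Real.exp (-ρ * T) with he
  set P : Matrix (Fin n) (Fin n) ℝ := mlOne α (T ^ α • A) with hP
  set v : Fin n → ℝ := (Wc⁻¹ * P) *ᵥ y₀ with hv
  -- the entrywise Gramian integrand
  set h : Fin n → Fin n → ℝ → ℝ := fun i j τ =>
    (Real.exp (-2 * ρ * (T - τ)) * (T - τ) ^ (2 * α - 2)) *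
      ((mlTwo α α ((T - τ) ^ α • A) * B * Bᵀ *
        (mlTwo α α ((T - τ) ^ α • A))ᵀ) i j) with hh
  have hWc' : ∀ i j, Wc i j = ∫ τ in (0 : ℝ)..T, h i j τ := by
    intro i j; rw [hWc]
  clear_value e P v h
  have hWcinv : Wc * Wc⁻¹ = 1 :=
    Matrix.mul_nonsing_inv Wc ((Matrix.isUnit_iff_isUnit_det Wc).mp hInv)
  -- Step 1: the closed-loop integrand rewritten as a finite sum of rank-one terms
  have step1 : Set.EqOn
      (fun τ => (Real.exp (-ρ * (T - τ)) * (T - τ) ^ (α - 1)) •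
        ((mlTwo α α ((T - τ) ^ α • A) * B) *ᵥ u τ))
      (fun τ => ∑ i' : Fin n, ∑ j : Fin n,
        (-(e * v j) * h i' j τ) • (Pi.single i' 1 : Fin n → ℝ))
      (Set.uIcc 0 T) := by
    intro τ hτ
    have hτ' : 0 ≤ T - τ := by
      rw [Set.uIcc_of_le hT.le] at hτ
      exact sub_nonneg.mpr hτ.2
    have htrans : mlTwo α α ((T - τ) ^ α • Aᵀ)
        = (mlTwo α α ((T - τ) ^ α • A))ᵀ := by
      rw [← Matrix.transpose_smul, mlTwo_transpose]
    set E : Matrix (Fin n) (Fin n) ℝ := mlTwo α α ((T - τ) ^ α • A) with hE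
    have hrpow : (T - τ) ^ (α - 1) * (T - τ) ^ (α - 1) = (T - τ) ^ (2 * α - 2) := by
      have h2 : (2 * α - 2 : ℝ) = (α - 1) + (α - 1) := by ring
      rw [h2, Real.rpow_add' hτ' (by rw [← h2]; intro H; nlinarith)]
    have hexp : Real.exp (-ρ * (T - τ)) * Real.exp (-ρ * (T - τ))
        = Real.exp (-2 * ρ * (T - τ)) := by
      rw [← Real.exp_add]; ring_nf
    simp only [hu, htrans]
    rw [neg_smul, Matrix.mulVec_neg, Matrix.mulVec_smul, Matrix.mulVec_mulVec]
    have hassoc : E * B * (Bᵀ * Eᵀ * Wc⁻¹ * P) = (E * B * Bᵀ * Eᵀ) * (Wc⁻¹ * P) := by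
      simp only [Matrix.mul_assoc]
    rw [hassoc, ← Matrix.mulVec_mulVec, ← hv]
    funext i'
    simp only [Pi.smul_apply, Pi.neg_apply, smul_eq_mul, Finset.sum_apply,
      Pi.single_apply, mul_ite, mul_one, mul_zero]
    rw [Finset.sum_comm]
    simp only [Finset.sum_ite_eq, Finset.sum_ite_eq', Finset.mem_univ, if_true]
    have expand : ((E * B * Bᵀ * Eᵀ) *ᵥ v) i' = ∑ j, (E * B * Bᵀ * Eᵀ) i' j * v j := by
      simp [Matrix.mulVec, dotProduct]
    rw [expand, hh]
    simp only [← hE]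
    have hsc : ∀ S : ℝ, Real.exp (-ρ * (T - τ)) * (T - τ) ^ (α - 1) *
        -((T - τ) ^ (α - 1) * Real.exp (-ρ * (T - τ)) * e * S)
        = -((Real.exp (-2 * ρ * (T - τ)) * (T - τ) ^ (2 * α - 2) * e) * S) := by
      intro S; rw [← hexp, ← hrpow]; ring
    rw [hsc, Finset.mul_sum, neg_eq_iff_eq_neg, ← Finset.sum_neg_distrib]
    exact Finset.sum_congr rfl fun j _ => by ring
  have hint : ∀ i' j : Fin n, IntervalIntegrable
      (fun τ => (-(e * v j) * h i' j τ) • (Pi.single i' 1 : Fin n → ℝ)) volume 0 T := by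
    intro i' j
    have h1 : IntervalIntegrable (fun τ => -(e * v j) * h i' j τ) volume 0 T := by
      simp only [hh]
      exact (hWcInt i' j).const_mul _
    exact ⟨h1.1.smul_const _, h1.2.smul_const _⟩
  have step2 : (∫ τ in (0 : ℝ)..T, (Real.exp (-ρ * (T - τ)) * (T - τ) ^ (α - 1)) •
      ((mlTwo α α ((T - τ) ^ α • A) * B) *ᵥ u τ)) = -(e • (P *ᵥ y₀)) := by
    rw [intervalIntegral.integral_congr step1]
    have hsum1 : (∫ τ in (0 : ℝ)..T, ∑ i' : Fin n, ∑ j : Fin n,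
        (-(e * v j) * h i' j τ) • (Pi.single i' 1 : Fin n → ℝ))
        = ∑ i' : Fin n, ∫ τ in (0 : ℝ)..T, ∑ j : Fin n,
        (-(e * v j) * h i' j τ) • (Pi.single i' 1 : Fin n → ℝ) :=
      intervalIntegral.integral_finset_sum
        (f := fun i' τ => ∑ j : Fin n,
          (-(e * v j) * h i' j τ) • (Pi.single i' 1 : Fin n → ℝ))
        (fun i' _ => by
          have hs := IntervalIntegrable.sum (μ := volume) (a := 0) (b := T)
            (f := fun j τ => (-(e * v j) * h i' j τ) • (Pi.single i' 1 : Fin n → ℝ))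
            Finset.univ (fun j _ => hint i' j)
          simpa [Finset.sum_fn] using hs)
    rw [hsum1]
    have hcol : ∀ i' : Fin n, (∫ τ in (0 : ℝ)..T, ∑ j : Fin n,
        (-(e * v j) * h i' j τ) • (Pi.single i' 1 : Fin n → ℝ))
        = ∑ j : Fin n, (-(e * v j) * Wc i' j) • (Pi.single i' 1 : Fin n → ℝ) := by
      intro i'
      rw [intervalIntegral.integral_finset_sum
        (f := fun j τ => (-(e * v j) * h i' j τ) • (Pi.single i' 1 : Fin n → ℝ))
        (fun j _ => hint i' j)]
      refine Finset.sum_congr rfl fun j _ => ?_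
      rw [intervalIntegral.integral_smul_const, intervalIntegral.integral_const_mul, hWc' i' j]
    simp only [hcol]
    have hWcv : Wc *ᵥ v = P *ᵥ y₀ := by
      rw [hv, Matrix.mulVec_mulVec, ← Matrix.mul_assoc, hWcinv, Matrix.one_mul]
    funext i''
    simp only [Finset.sum_apply, Pi.smul_apply, Pi.single_apply, smul_eq_mul,
      mul_ite, mul_one, mul_zero, Pi.neg_apply]
    rw [Finset.sum_comm]
    simp only [Finset.sum_ite_eq, Finset.sum_ite_eq', Finset.mem_univ, if_true]
    have expand : (Wc *ᵥ v) i'' = ∑ j, Wc i'' j * v j := by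
      simp [Matrix.mulVec, dotProduct]
    rw [← hWcv, expand, Finset.mul_sum, ← Finset.sum_neg_distrib]
    exact Finset.sum_congr rfl fun j _ => by ring
  simp only [hy]
  rw [← he, ← hP, step2, add_neg_cancel]
end

section
/- Let α ∈ (0,1), ρ > 0, A an n × n real matrix and B an n × m real matrix. For any T > 0 and any control u : [0,T] → ℝᵐ, the reachable displacement y(T) - e^{-ρT} E_α(A T^α) y₀ = ∫_0^T e^{-ρ(T-τ)} (T-τ)^{α-1} E_{α,α}(A (T-τ)^α) B u(τ) dτ lies in the column space of the Kalman matrix K = [B, AB, A²B, …, A^{n-1}B]. Consequently, if the tempered fractional system is controllable (every state reachable), then rank(K) = n. -/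
open Matrix MeasureTheory

attribute [local instance] Matrix.linftyOpNormedRing Matrix.linftyOpNormedAlgebra

/-- The Kalman matrix `K = [B, AB, …, A^{n-1}B]`, with block columns indexed
by `Fin n × Fin m`. -/
noncomputable def kalman {n m : ℕ} (A : Matrix (Fin n) (Fin n) ℝ)
    (B : Matrix (Fin n) (Fin m) ℝ) : Matrix (Fin n) (Fin n × Fin m) ℝ :=
  Matrix.of fun i q => (A ^ (q.1 : ℕ) * B) i q.2

namespace KalmanAux

variable {n m : ℕ}

/-- The span of the powers `A^0, …, A^{n-1}`. -/
noncomputable def spanPow (A : Matrix (Fin n) (Fin n) ℝ) :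
    Submodule ℝ (Matrix (Fin n) (Fin n) ℝ) :=
  Submodule.span ℝ (Set.range fun i : Fin n => A ^ (i : ℕ))

/-- By Cayley–Hamilton, every power of `A` lies in the span of the first `n`. -/
lemma pow_mem_spanPow (A : Matrix (Fin n) (Fin n) ℝ) (k : ℕ) :
    A ^ k ∈ spanPow A := by
  induction k using Nat.strong_induction_on with
  | _ k ih =>
    by_cases hk : k < n
    · exact Submodule.subset_span ⟨⟨k, hk⟩, rfl⟩
    · push_neg at hk
      obtain ⟨j, rfl⟩ := Nat.exists_eq_add_of_le hk
      have hdeg : A.charpoly.natDegree = n := by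
        simpa using A.charpoly_natDegree_eq_dim
      have h0 : (Polynomial.aeval A) A.charpoly = 0 := A.aeval_self_charpoly
      rw [Polynomial.aeval_eq_sum_range, hdeg, Finset.sum_range_succ] at h0
      have hcn : A.charpoly.coeff n = 1 := by
        have := A.charpoly_monic.coeff_natDegree
        rwa [hdeg] at this
      rw [hcn, one_smul] at h0
      have hCH : A ^ n = -∑ i ∈ Finset.range n, A.charpoly.coeff i • A ^ i := by
        linear_combination (norm := module) h0
      have hkey : A ^ (n + j) =
          -∑ i ∈ Finset.range n, A.charpoly.coeff i • A ^ (i + j) := by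
        rw [pow_add, hCH, neg_mul, Finset.sum_mul]
        congr 1
        refine Finset.sum_congr rfl fun i _ => ?_
        rw [smul_mul_assoc, ← pow_add]
      rw [hkey]
      refine Submodule.neg_mem _ (Submodule.sum_mem _ fun i hi => ?_)
      exact Submodule.smul_mem _ _ (ih _ (by have := Finset.mem_range.mp hi; omega))

/-- The matrix Mittag-Leffler function of `s • A` lies in the span of the
powers of `A`, since that span is a closed subspace. -/
lemma mlTwo_mem_spanPow (α α' s : ℝ) (A : Matrix (Fin n) (Fin n) ℝ) :
    mlTwo α α' (s • A) ∈ spanPow A := by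
  by_cases h : Summable (fun l : ℕ => (Real.Gamma (α * l + α'))⁻¹ • (s • A) ^ l)
  · refine (Submodule.closed_of_finiteDimensional (spanPow A)).mem_of_tendsto
      h.hasSum (Filter.Eventually.of_forall fun t => ?_)
    refine Submodule.sum_mem _ fun l _ => ?_
    rw [smul_pow, smul_smul]
    exact Submodule.smul_mem _ _ (pow_mem_spanPow A l)
  · rw [mlTwo, tsum_eq_zero_of_not_summable h]
    exact Submodule.zero_mem _

lemma mem_range_of_spanPow (A : Matrix (Fin n) (Fin n) ℝ) (B : Matrix (Fin n) (Fin m) ℝ)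
    (x : Fin m → ℝ) {M : Matrix (Fin n) (Fin n) ℝ} (hM : M ∈ spanPow A) :
    M *ᵥ (B *ᵥ x) ∈ LinearMap.range (kalman A B).mulVecLin := by
  induction hM using Submodule.span_induction with
  | mem M hM =>
    obtain ⟨i, rfl⟩ := hM
    refine ⟨fun q => if q.1 = i then x q.2 else 0, ?_⟩
    ext r
    rw [mulVec_mulVec, Matrix.mulVecLin_apply]
    simp [kalman, Matrix.mulVec, dotProduct, Fintype.sum_prod_type, mul_ite,
      Finset.sum_ite_eq']
  | zero => simp only [Matrix.zero_mulVec]; exact Submodule.zero_mem _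
  | add a b ha hb iha ihb =>
    rw [Matrix.add_mulVec]; exact Submodule.add_mem _ iha ihb
  | smul c a ha ih =>
    rw [Matrix.smul_mulVec]; exact Submodule.smul_mem _ _ ih

/-- An interval integral of a function valued in a (closed, by finite
dimensionality) subspace lies in that subspace. -/
lemma integral_mem {T : ℝ} (f : ℝ → Fin n → ℝ) (hf : IntervalIntegrable f volume 0 T)
    (S : Submodule ℝ (Fin n → ℝ)) (hmem : ∀ τ, f τ ∈ S) :
    (∫ τ in (0:ℝ)..T, f τ) ∈ S := by
  obtain ⟨S', hc⟩ := Submodule.exists_isCompl S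
  set q : (Fin n → ℝ) →ₗ[ℝ] S' := Submodule.linearProjOfIsCompl S' S hc.symm with hq
  have hker : LinearMap.ker q = S := Submodule.linearProjOfIsCompl_ker hc.symm
  set qc : (Fin n → ℝ) →L[ℝ] S' := LinearMap.toContinuousLinearMap q with hqc
  have h1 : qc (∫ τ in (0:ℝ)..T, f τ) = ∫ τ in (0:ℝ)..T, qc (f τ) :=
    (ContinuousLinearMap.intervalIntegral_comp_comm qc hf).symm
  have h2 : ∀ τ, qc (f τ) = 0 := fun τ => by
    have : f τ ∈ LinearMap.ker q := hker.symm ▸ hmem τ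
    simpa [hqc] using this
  rw [← hker]
  show q _ = 0
  have : qc (∫ τ in (0:ℝ)..T, f τ) = 0 := by rw [h1]; simp [h2]
  simpa [hqc] using this

end KalmanAux

/-- Every reachable displacement of the tempered fractional system lies in the
column space of the Kalman matrix; consequently, controllability forces
`rank K = n`. -/
theorem reachable_in_kalman_range {n m : ℕ}
    (α ρ : ℝ) (hα : α ∈ Set.Ioo (0 : ℝ) 1) (hρ : 0 < ρ)
    (A : Matrix (Fin n) (Fin n) ℝ) (B : Matrix (Fin n) (Fin m) ℝ) :
    (∀ (T : ℝ), 0 < T → ∀ u : ℝ → Fin m → ℝ,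
      (IntervalIntegrable (fun τ : ℝ =>
          (Real.exp (-ρ * (T - τ)) * (T - τ) ^ (α - 1)) •
            ((mlTwo α α ((T - τ) ^ α • A) * B) *ᵥ u τ)) volume 0 T) →
      ∃ w : Fin n × Fin m → ℝ,
        kalman A B *ᵥ w = ∫ τ in (0 : ℝ)..T,
          (Real.exp (-ρ * (T - τ)) * (T - τ) ^ (α - 1)) •
            ((mlTwo α α ((T - τ) ^ α • A) * B) *ᵥ u τ)) ∧
    ((∀ z : Fin n → ℝ, ∃ (T : ℝ) (_ : 0 < T) (u : ℝ → Fin m → ℝ),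
        IntervalIntegrable (fun τ : ℝ =>
          (Real.exp (-ρ * (T - τ)) * (T - τ) ^ (α - 1)) •
            ((mlTwo α α ((T - τ) ^ α • A) * B) *ᵥ u τ)) volume 0 T ∧
        (∫ τ in (0 : ℝ)..T,
          (Real.exp (-ρ * (T - τ)) * (T - τ) ^ (α - 1)) •
            ((mlTwo α α ((T - τ) ^ α • A) * B) *ᵥ u τ)) = z) →
      (kalman A B).rank = n) := by
  have key : ∀ (T : ℝ), 0 < T → ∀ u : ℝ → Fin m → ℝ,
      (IntervalIntegrable (fun τ : ℝ =>
          (Real.exp (-ρ * (T - τ)) * (T - τ) ^ (α - 1)) •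
            ((mlTwo α α ((T - τ) ^ α • A) * B) *ᵥ u τ)) volume 0 T) →
      ∃ w : Fin n × Fin m → ℝ,
        kalman A B *ᵥ w = ∫ τ in (0 : ℝ)..T,
          (Real.exp (-ρ * (T - τ)) * (T - τ) ^ (α - 1)) •
            ((mlTwo α α ((T - τ) ^ α • A) * B) *ᵥ u τ) := by
    intro T hT u hu
    have hmem : ∀ τ : ℝ,
        (Real.exp (-ρ * (T - τ)) * (T - τ) ^ (α - 1)) •
            ((mlTwo α α ((T - τ) ^ α • A) * B) *ᵥ u τ) ∈
          LinearMap.range (kalman A B).mulVecLin := by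
      intro τ
      refine Submodule.smul_mem _ _ ?_
      rw [← Matrix.mulVec_mulVec]
      exact KalmanAux.mem_range_of_spanPow A B (u τ)
        (KalmanAux.mlTwo_mem_spanPow α α ((T - τ) ^ α) A)
    obtain ⟨w, hw⟩ := KalmanAux.integral_mem _ hu
      (LinearMap.range (kalman A B).mulVecLin) hmem
    exact ⟨w, hw⟩
  refine ⟨key, fun hsurj => ?_⟩
  have htop : LinearMap.range (kalman A B).mulVecLin = ⊤ := by
    rw [eq_top_iff]
    rintro z -
    obtain ⟨T, hT, u, hu, hz⟩ := hsurj z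
    obtain ⟨w, hw⟩ := key T hT u hu
    exact ⟨w, by rw [Matrix.mulVecLin_apply, hw, hz]⟩
  rw [Matrix.rank, htop, finrank_top, Module.finrank_fin_fun]
end
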